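/- arXiv:1806.01918 — 2 statements merged into one kernel-verified Lean document; each statement's English description precedes it below -/
import Mathlib

section
/- Let γ ∈ Γ be a collection satisfying the bound condition. In the multilayer setting with widths n_0, …, n_L and layers h = (h_1, …, h_L), the number of attained multi signatures satisfies |𝒮_h| ≤ ‖φ^{(γ)}_{n_L} ∘ ⋯ ∘ φ^{(γ)}_{n_1}(e_{n_0})‖₁, where ‖v‖₁ = Σ_{j=0}^∞ v_j. -/
open Matrix

noncomputable def relu {n n' : ℕ} (W : Matrix (Fin n') (Fin n) ℝ) (b : Fin n' → ℝ)
    (x : Fin n → ℝ) : Fin n' → ℝ :=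
  fun i => max 0 (W i ⬝ᵥ x + b i)

noncomputable def sig {n n' : ℕ} (W : Matrix (Fin n') (Fin n) ℝ) (b : Fin n' → ℝ)
    (x : Fin n → ℝ) : Fin n' → Bool :=
  fun i => decide (0 < W i ⬝ᵥ x + b i)

/-- Forward pass through the first `l` layers: `fwd n W b l = h_l ∘ ⋯ ∘ h_1`. -/
noncomputable def fwd (n : ℕ → ℕ) (W : ∀ l : ℕ, Matrix (Fin (n (l + 1))) (Fin (n l)) ℝ)
    (b : ∀ l : ℕ, Fin (n (l + 1)) → ℝ) : (l : ℕ) → (Fin (n 0) → ℝ) → (Fin (n l) → ℝ)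
  | 0 => fun x => x
  | l + 1 => fun x => relu (W l) (b l) (fwd n W b l x)

/-- Multi signature of length `m`:
`msig n W b m x = (S_{h_1}(x), S_{h_2}(h_1(x)), …, S_{h_m}(h_{m-1}∘⋯∘h_1(x)))`. -/
noncomputable def msig (n : ℕ → ℕ) (W : ∀ l : ℕ, Matrix (Fin (n (l + 1))) (Fin (n l)) ℝ)
    (b : ∀ l : ℕ, Fin (n (l + 1)) → ℝ) (m : ℕ) (x : Fin (n 0) → ℝ) :
    ∀ l : Fin m, Fin (n (l.val + 1)) → Bool :=
  fun l => sig (W l.val) (b l.val) (fwd n W b l.val x)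

/-- Number of active units of a binary vector `s`, i.e. `|s|`. -/
def cnt {k : ℕ} (s : Fin k → Bool) : ℕ := (Finset.univ.filter fun j => s j = true).card

/-- `min(n_0, |s_1|, …, |s_i|)` for a length-`i` multi signature `s`. -/
def minAct (n : ℕ → ℕ) (i : ℕ) (s : ∀ l : Fin i, Fin (n (l.val + 1)) → Bool) : ℕ :=
  Finset.univ.fold min (n 0) (fun l : Fin i => cnt (s l))


/-- Tail sum `∑_{j ≥ J} v j` of a histogram. -/
noncomputable def tailSum (v : ℕ → ℕ) (J : ℕ) : ℕ :=
  ∑' j : ℕ, if J ≤ j then v j else 0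

/-- The partial order `≼` on histograms: `v ≼ w` iff all tail sums of `v` are dominated by
those of `w`. -/
def hle (v w : ℕ → ℕ) : Prop := ∀ J : ℕ, tailSum v J ≤ tailSum w J

/-- The histogram `e_i` with a single entry `1` at index `i`. -/
def histE (i : ℕ) : ℕ → ℕ := fun j => if j = i then 1 else 0

/-- The activation histogram `ℋ_{n'}(𝒮)`: entry `j` counts the signatures `s ∈ 𝒮` with
`|s| = j` active units. -/
noncomputable def actHist (n' : ℕ) (S : Set (Fin n' → Bool)) : ℕ → ℕ :=
  fun j => {s ∈ S | cnt s = j}.ncard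

/-- The clipping function `cl_k`: all mass at indices `≥ k` is moved to index `k`. -/
noncomputable def clip (k : ℕ) (v : ℕ → ℕ) : ℕ → ℕ :=
  fun i => if i < k then v i else if i = k then tailSum v k else 0

/-- The bound condition for a collection `γ` (accessed as `γ n' n` for `n ≤ n'`, `n' ≥ 1`):
every `γ n' n` is a histogram in `V` (finitely supported); for every ReLU layer function
`h ∈ RL(n, n')` with `0 ≤ n ≤ n'` the activation histogram of its attained signatures is
dominated by `γ n' n` (for `n = 0` the layer functions are the constants, with activation
histogram `e_0`); and `γ n' n ≼ γ n' m` whenever `n ≤ m ≤ n'`. -/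
def BoundCondition (γ : ℕ → ℕ → ℕ → ℕ) : Prop :=
  (∀ n' n : ℕ, 0 < n' → n ≤ n' → (Function.support (γ n' n)).Finite) ∧
  (∀ n' : ℕ, 0 < n' → hle (histE 0) (γ n' 0)) ∧
  (∀ n n' : ℕ, 0 < n → 0 < n' → n ≤ n' →
    ∀ (W : Matrix (Fin n') (Fin n) ℝ) (b : Fin n' → ℝ),
      hle (actHist n' (Set.range (sig W b))) (γ n' n)) ∧
  (∀ n' n m : ℕ, 0 < n' → n ≤ m → m ≤ n' → hle (γ n' n) (γ n' m))

/-- The transition function `φ^{(γ)}_{n'} : V → V`,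
`v ↦ ∑_{m} v_m · cl_{min(m,n')}(γ_{min(m,n'), n'})`. -/
noncomputable def phi (γ : ℕ → ℕ → ℕ → ℕ) (n' : ℕ) (v : ℕ → ℕ) : ℕ → ℕ :=
  fun i => ∑' m : ℕ, v m * clip (min m n') (γ n' (min m n')) i

/-- The dimension histogram `H̃^{(i)}(U)`: entry `j` counts the length-`i` multi signatures
`(s_1, …, s_i) ∈ U` with `min(n_0, |s_1|, …, |s_i|) = j`. -/
noncomputable def dimHist (n : ℕ → ℕ) (i : ℕ)
    (U : Set (∀ l : Fin i, Fin (n (l.val + 1)) → Bool)) : ℕ → ℕ :=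
  fun j => {u ∈ U | minAct n i u = j}.ncard


/-- The iterated transition histograms: `phiIter γ n 0 = e_{n 0}` and
`phiIter γ n (l+1) = φ^{(γ)}_{n (l+1)} (phiIter γ n l)`, so that
`phiIter γ n L = φ^{(γ)}_{n_L} ∘ ⋯ ∘ φ^{(γ)}_{n_1} (e_{n_0})`. -/
noncomputable def phiIter (γ : ℕ → ℕ → ℕ → ℕ) (n : ℕ → ℕ) : ℕ → (ℕ → ℕ)
  | 0 => histE (n 0)
  | l + 1 => phi γ (n (l + 1)) (phiIter γ n l)

def supBnd (v : ℕ → ℕ) (N : ℕ) : Prop := ∀ j, N ≤ j → v j = 0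

lemma supBnd.mono {v : ℕ → ℕ} {N M : ℕ} (h : supBnd v N) (hNM : N ≤ M) : supBnd v M :=
  fun j hj => h j (hNM.trans hj)

lemma exists_supBnd {v : ℕ → ℕ} (h : (Function.support v).Finite) : ∃ N, supBnd v N := by
  obtain ⟨N, hN⟩ := h.bddAbove
  refine ⟨N + 1, fun j hj => ?_⟩
  by_contra hv
  have : j ∈ Function.support v := hv
  have := hN this
  omega

lemma tailSum_eq_Ico {v : ℕ → ℕ} {N : ℕ} (hv : supBnd v N) (J : ℕ) (_hJ : J ≤ N) :
    tailSum v J = ∑ j ∈ Finset.Ico J N, v j := by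
  rw [tailSum, tsum_eq_sum (s := Finset.Ico J N)]
  · exact Finset.sum_congr rfl (fun j hj => if_pos (Finset.mem_Ico.mp hj).1)
  · intro j hj
    rw [Finset.mem_Ico] at hj
    push_neg at hj
    by_cases h : J ≤ j
    · simp [h, hv j (hj h)]
    · simp [h]

lemma tailSum_eq_zero {v : ℕ → ℕ} {N : ℕ} (hv : supBnd v N) (J : ℕ) (hJ : N ≤ J) :
    tailSum v J = 0 := by
  rw [tailSum]
  convert tsum_zero with j
  by_cases h : J ≤ j
  · simp [h, hv j (hJ.trans h)]
  · simp [h]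

lemma tailSum_histE (i J : ℕ) : tailSum (histE i) J = if J ≤ i then 1 else 0 := by
  rw [tailSum]
  have : (fun j => if J ≤ j then histE i j else 0)
      = fun j => if j = i then (if J ≤ i then 1 else 0) else 0 := by
    funext j
    by_cases h : j = i
    · subst h; simp [histE]
    · simp [histE, h]
  rw [this, tsum_ite_eq]

lemma supBnd_histE (i : ℕ) : supBnd (histE i) (i + 1) := by
  intro j hj
  have : j ≠ i := by omega
  simp [histE, this]

lemma supBnd_clip (k : ℕ) (v : ℕ → ℕ) : supBnd (clip k v) (k + 1) := by
  intro j hj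
  have h1 : ¬ j < k := by omega
  have h2 : j ≠ k := by omega
  simp [clip, h1, h2]

lemma tailSum_clip {v : ℕ → ℕ} {N : ℕ} (hv : supBnd v N) (k J : ℕ) :
    tailSum (clip k v) J = if J ≤ k then tailSum v J else 0 := by
  by_cases hJk : J ≤ k
  · rw [if_pos hJk]
    set N' := max N (k + 1) with hN'
    have hvN' : supBnd v N' := hv.mono (le_max_left _ _)
    have hkN' : k + 1 ≤ N' := le_max_right _ _
    rw [tailSum_eq_Ico (supBnd_clip k v) J (by omega),
        tailSum_eq_Ico hvN' J (by omega)]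
    have h1 : ∑ j ∈ Finset.Ico J (k+1), clip k v j
        = (∑ j ∈ Finset.Ico J k, v j) + tailSum v k := by
      rw [Finset.sum_Ico_succ_top hJk]
      congr 1
      · exact Finset.sum_congr rfl (fun j hj => if_pos (Finset.mem_Ico.mp hj).2)
      · simp [clip]
    rw [h1, tailSum_eq_Ico hvN' k (by omega),
        ← Finset.sum_Ico_consecutive _ hJk (by omega : k ≤ N')]
  · rw [if_neg hJk]
    apply tailSum_eq_zero (supBnd_clip k v)
    omega

/-- Abel summation comparison. -/
lemma abel_le {v w a : ℕ → ℕ} {N : ℕ} (hv : supBnd v N) (hw : supBnd w N)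
    (hvw : hle v w) (ha : Monotone a) :
    ∑ m ∈ Finset.range N, v m * a m ≤ ∑ m ∈ Finset.range N, w m * a m := by
  have key : ∀ u : ℕ → ℕ, supBnd u N →
      ∑ m ∈ Finset.range N, u m * a m
        = a 0 * tailSum u 0 + ∑ j ∈ Finset.Ico 1 N, (a j - a (j-1)) * tailSum u j := by
    intro u hu
    have hdecomp : ∀ m, a m = a 0 + ∑ j ∈ Finset.Ico 1 (m+1), (a j - a (j-1)) := by
      intro m
      induction m with
      | zero => simp
      | succ m ih =>
        rw [Finset.sum_Ico_succ_top (by omega : 1 ≤ m + 1), ← add_assoc, ← ih]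
        simp only [Nat.add_sub_cancel]
        have := ha (Nat.le_succ m)
        simp only [Nat.succ_eq_add_one] at *
        omega
    calc ∑ m ∈ Finset.range N, u m * a m
        = ∑ m ∈ Finset.range N, (u m * a 0 + ∑ j ∈ Finset.Ico 1 (m+1), u m * (a j - a (j-1))) := by
          apply Finset.sum_congr rfl
          intro m _
          rw [hdecomp m, Nat.mul_add, Finset.mul_sum]
      _ = (∑ m ∈ Finset.range N, u m * a 0)
            + ∑ m ∈ Finset.range N, ∑ j ∈ Finset.Ico 1 (m+1), u m * (a j - a (j-1)) := by
          rw [Finset.sum_add_distrib]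
      _ = a 0 * tailSum u 0 + ∑ j ∈ Finset.Ico 1 N, (a j - a (j-1)) * tailSum u j := by
          congr 1
          · rw [tailSum_eq_Ico hu 0 (by omega), ← Finset.sum_mul, mul_comm]
            congr 1
            rw [Finset.range_eq_Ico]
          · rw [Finset.sum_comm' (t' := Finset.Ico 1 N)
              (s' := fun j => Finset.Ico j N)]
            · apply Finset.sum_congr rfl
              intro j hj
              rw [Finset.mem_Ico] at hj
              rw [tailSum_eq_Ico hu j (by omega), mul_comm, Finset.sum_mul]
            · intro m j
              simp only [Finset.mem_range, Finset.mem_Ico]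
              omega
  rw [key v hv, key w hw]
  gcongr
  · exact hvw 0
  · exact hvw _

section Phi

variable {γ : ℕ → ℕ → ℕ → ℕ} {n' : ℕ}

lemma supBnd_phi (γ : ℕ → ℕ → ℕ → ℕ) (n' : ℕ) (v : ℕ → ℕ) :
    supBnd (phi γ n' v) (n' + 1) := by
  intro j hj
  rw [phi]
  convert tsum_zero with m
  rw [supBnd_clip (min m n') _ j (by omega), mul_zero]

lemma phi_eq_sum {v : ℕ → ℕ} {N : ℕ} (hv : supBnd v N) (i : ℕ) :
    phi γ n' v i = ∑ m ∈ Finset.range N, v m * clip (min m n') (γ n' (min m n')) i := by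
  rw [phi]
  apply tsum_eq_sum
  intro m hm
  rw [Finset.mem_range] at hm
  rw [hv m (by omega), zero_mul]

lemma tailSum_phi {v : ℕ → ℕ} {N : ℕ} (hv : supBnd v N) (J : ℕ) :
    tailSum (phi γ n' v) J
      = ∑ m ∈ Finset.range N, v m * tailSum (clip (min m n') (γ n' (min m n'))) J := by
  by_cases hJ : J ≤ n' + 1
  · rw [tailSum_eq_Ico (supBnd_phi γ n' v) J hJ]
    calc ∑ j ∈ Finset.Ico J (n'+1), phi γ n' v j
        = ∑ j ∈ Finset.Ico J (n'+1), ∑ m ∈ Finset.range N,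
            v m * clip (min m n') (γ n' (min m n')) j :=
          Finset.sum_congr rfl (fun j _ => phi_eq_sum hv j)
      _ = ∑ m ∈ Finset.range N, ∑ j ∈ Finset.Ico J (n'+1),
            v m * clip (min m n') (γ n' (min m n')) j := Finset.sum_comm
      _ = _ := by
          apply Finset.sum_congr rfl
          intro m _
          rw [← Finset.mul_sum]
          congr 1
          rw [tailSum_eq_Ico ((supBnd_clip _ _).mono (by omega)) J hJ]
  · rw [tailSum_eq_zero (supBnd_phi γ n' v) J (by omega)]
    symm
    apply Finset.sum_eq_zero
    intro m _
    rw [tailSum_eq_zero ((supBnd_clip _ _).mono (by omega : min m n' + 1 ≤ n' + 1)) J (by omega),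
      mul_zero]

lemma aJ_mono (hγ : BoundCondition γ) (hn' : 0 < n') (J : ℕ) :
    Monotone (fun m => tailSum (clip (min m n') (γ n' (min m n'))) J) := by
  intro m m' hmm'
  simp only
  obtain ⟨N1, hN1⟩ := exists_supBnd (hγ.1 n' (min m n') hn' (min_le_right _ _))
  obtain ⟨N2, hN2⟩ := exists_supBnd (hγ.1 n' (min m' n') hn' (min_le_right _ _))
  rw [tailSum_clip hN1, tailSum_clip hN2]
  by_cases h : J ≤ min m n'
  · rw [if_pos h, if_pos (by omega : J ≤ min m' n')]
    exact hγ.2.2.2 n' (min m n') (min m' n') hn' (by omega) (min_le_right _ _) J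
  · rw [if_neg h]
    exact Nat.zero_le _

lemma supBnd_phiIter (γ : ℕ → ℕ → ℕ → ℕ) (n : ℕ → ℕ) (l : ℕ) :
    supBnd (phiIter γ n l) (n 0 + n l + 1) := by
  cases l with
  | zero => exact (supBnd_histE (n 0)).mono (by omega)
  | succ l => exact (supBnd_phi γ (n (l+1)) _).mono (by omega)

end Phi

lemma cnt_le {k : ℕ} (s : Fin k → Bool) : cnt s ≤ k := by
  classical
  calc cnt s ≤ Finset.univ.card := Finset.card_filter_le _ _
    _ = k := by simp

noncomputable def selEquiv {k : ℕ} (s : Fin k → Bool) : {i // s i = true} ≃ Fin (cnt s) :=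
  Fintype.equivFinOfCardEq (Fintype.card_subtype _)

noncomputable def selE {k : ℕ} (s : Fin k → Bool) :
    (Fin (cnt s) → ℝ) →ₗ[ℝ] (Fin k → ℝ) :=
  LinearMap.pi (fun i => if h : s i = true then LinearMap.proj (selEquiv s ⟨i, h⟩) else 0)

noncomputable def selP {k : ℕ} (s : Fin k → Bool) :
    (Fin k → ℝ) →ₗ[ℝ] (Fin (cnt s) → ℝ) :=
  LinearMap.pi (fun j => LinearMap.proj ((selEquiv s).symm j).val)

lemma selE_selP {k : ℕ} (s : Fin k → Bool) (v : Fin k → ℝ) (i : Fin k) :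
    selE s (selP s v) i = if s i = true then v i else 0 := by
  rw [selE, LinearMap.pi_apply]
  by_cases h : s i = true
  · rw [dif_pos h, if_pos h, LinearMap.proj_apply, selP, LinearMap.pi_apply,
      LinearMap.proj_apply, Equiv.symm_apply_apply]
  · rw [dif_neg h, if_neg h]
    rfl

lemma minAct_le_n0 (n : ℕ → ℕ) (i : ℕ) (u : ∀ l : Fin i, Fin (n (l.val + 1)) → Bool) :
    minAct n i u ≤ n 0 := by
  rw [minAct, Finset.fold_min_le]
  exact Or.inl le_rfl

lemma minAct_zero (n : ℕ → ℕ) (u : ∀ l : Fin 0, Fin (n (l.val + 1)) → Bool) :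
    minAct n 0 u = n 0 := by
  rw [minAct]
  simp

lemma minAct_snoc (n : ℕ → ℕ) (l : ℕ) (u' : ∀ j : Fin l, Fin (n (j.val + 1)) → Bool)
    (s : Fin (n (l + 1)) → Bool) :
    minAct n (l+1) (Fin.snoc u' s) = min (cnt s) (minAct n l u') := by
  rw [minAct, Fin.univ_castSuccEmb, Finset.fold_cons, Finset.fold_map]
  congr 1
  · rw [Fin.snoc_last]
  · rw [minAct]
    congr 1
    funext j
    show cnt (Fin.snoc (α := fun j : Fin (l+1) => Fin (n (j.val+1)) → Bool) u' s j.castSucc)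
        = cnt (u' j)
    rw [Fin.snoc_castSucc]

lemma msig_succ (n : ℕ → ℕ) (W : ∀ l : ℕ, Matrix (Fin (n (l + 1))) (Fin (n l)) ℝ)
    (b : ∀ l : ℕ, Fin (n (l + 1)) → ℝ) (l : ℕ) (x : Fin (n 0) → ℝ) :
    msig n W b (l+1) x = Fin.snoc (msig n W b l x) (sig (W l) (b l) (fwd n W b l x)) := by
  funext j
  refine Fin.lastCases ?_ ?_ j
  · rw [Fin.snoc_last]; rfl
  · intro j; rw [Fin.snoc_castSucc]; rfl

lemma fwd_affine (n : ℕ → ℕ) (W : ∀ l : ℕ, Matrix (Fin (n (l + 1))) (Fin (n l)) ℝ)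
    (b : ∀ l : ℕ, Fin (n (l + 1)) → ℝ) :
    ∀ (l : ℕ) (x0 : Fin (n 0) → ℝ),
    ∃ (f : (Fin (n 0) → ℝ) →ₗ[ℝ] (Fin (n l) → ℝ)) (c : Fin (n l) → ℝ),
      Module.finrank ℝ (LinearMap.range f) ≤ minAct n l (msig n W b l x0) ∧
      ∀ x, msig n W b l x = msig n W b l x0 → fwd n W b l x = f x + c := by
  intro l
  induction l with
  | zero =>
    intro x0
    refine ⟨LinearMap.id, 0, ?_, ?_⟩
    · rw [minAct_zero, LinearMap.range_id, finrank_top, Module.finrank_pi]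
      simp
    · intro x _
      simp [fwd]
  | succ l ih =>
    intro x0
    obtain ⟨f, c, hrank, hreg⟩ := ih x0
    set s : Fin (n (l+1)) → Bool := sig (W l) (b l) (fwd n W b l x0) with hs
    let A : (Fin (n l) → ℝ) →ₗ[ℝ] (Fin (n (l+1)) → ℝ) :=
      (selE s).comp ((selP s).comp (Matrix.mulVecLin (W l)))
    refine ⟨A.comp f, fun i => if s i then (W l *ᵥ c) i + b l i else 0, ?_, ?_⟩
    · have h1 : minAct n (l+1) (msig n W b (l+1) x0)
          = min (cnt s) (minAct n l (msig n W b l x0)) := by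
        rw [msig_succ, minAct_snoc]
      rw [h1]
      apply le_min
      · have h2 : LinearMap.range (A.comp f) ≤ LinearMap.range (selE s) := by
          have h3 : A.comp f
              = (selE s).comp (((selP s).comp (Matrix.mulVecLin (W l))).comp f) := by
            rw [LinearMap.comp_assoc]
          rw [h3]
          exact LinearMap.range_comp_le_range _ _
        calc Module.finrank ℝ (LinearMap.range (A.comp f))
            ≤ Module.finrank ℝ (LinearMap.range (selE s)) := Submodule.finrank_mono h2
          _ ≤ Module.finrank ℝ (Fin (cnt s) → ℝ) := LinearMap.finrank_range_le (selE s)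
          _ = cnt s := by rw [Module.finrank_pi]; simp
      · calc Module.finrank ℝ (LinearMap.range (A.comp f))
            = Module.finrank ℝ ((LinearMap.range f).map A) := by rw [LinearMap.range_comp]
          _ ≤ Module.finrank ℝ (LinearMap.range f) := Submodule.finrank_map_le A _
          _ ≤ _ := hrank
    · intro x hx
      have hpre : msig n W b l x = msig n W b l x0 := by
        funext j
        exact congrFun hx j.castSucc
      have hsig : sig (W l) (b l) (fwd n W b l x) = s := congrFun hx (Fin.last l)
      have hfwd : fwd n W b l x = f x + c := hreg x hpre
      funext i
      have hA : (A.comp f) x i = if s i = true then (W l *ᵥ f x) i else 0 := by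
        show selE s (selP s (Matrix.mulVecLin (W l) (f x))) i = _
        rw [selE_selP, Matrix.mulVecLin_apply]
      have hdot : W l i ⬝ᵥ (f x + c) + b l i
          = (W l *ᵥ f x) i + ((W l *ᵥ c) i + b l i) := by
        simp [Matrix.mulVec, dotProduct_add, add_assoc]
      show max 0 (W l i ⬝ᵥ fwd n W b l x + b l i)
          = (A.comp f) x i + (if s i = true then (W l *ᵥ c) i + b l i else 0)
      rw [hA]
      by_cases hi : s i = true
      · have h2 := congrFun hsig i
        simp only [sig, hi] at h2
        have hpos : 0 < W l i ⬝ᵥ fwd n W b l x + b l i := of_decide_eq_true h2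
        rw [if_pos hi, if_pos hi, hfwd] at *
        rw [max_eq_right hpos.le, hdot]
      · rw [Bool.not_eq_true] at hi
        have h2 := congrFun hsig i
        simp only [sig, hi] at h2
        have hneg := of_decide_eq_false h2
        rw [hi, if_neg (by simp : ¬ (false = true)), if_neg (by simp : ¬ (false = true)),
          add_zero, max_eq_left (le_of_not_gt hneg)]

section Counting

open scoped Classical

/-- Generic grouping: counting elements with `J ≤ g x` by the value of `g`. -/
lemma card_filter_ge_eq_sum {α : Type*} [Fintype α] (P : α → Prop) (g : α → ℕ) (Nb J : ℕ)
    (hg : ∀ x, g x ≤ Nb) :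
    (Finset.univ.filter (fun x => P x ∧ J ≤ g x)).card
      = ∑ j ∈ Finset.Ico J (Nb+1), (Finset.univ.filter (fun x => P x ∧ g x = j)).card := by
  rw [Finset.card_eq_sum_card_fiberwise
    (f := g) (t := Finset.Ico J (Nb+1))
    (fun x hx => by
      rw [Finset.mem_coe, Finset.mem_filter] at hx
      rw [Finset.mem_coe, Finset.mem_Ico]
      exact ⟨hx.2.2, by have := hg x; omega⟩)]
  apply Finset.sum_congr rfl
  intro j hj
  rw [Finset.mem_Ico] at hj
  congr 1
  ext x
  simp only [Finset.mem_filter, Finset.mem_univ, true_and]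
  constructor
  · rintro ⟨⟨hP, _⟩, hgj⟩; exact ⟨hP, hgj⟩
  · rintro ⟨hP, hgj⟩; exact ⟨⟨hP, by omega⟩, hgj⟩

lemma tailSum_count {α : Type*} [Fintype α] (P : α → Prop) (g : α → ℕ) (Nb : ℕ)
    (hg : ∀ x, g x ≤ Nb) (J : ℕ) :
    tailSum (fun m => (Finset.univ.filter (fun x => P x ∧ g x = m)).card) J
      = (Finset.univ.filter (fun x => P x ∧ J ≤ g x)).card := by
  have hsup : supBnd (fun m => (Finset.univ.filter (fun x => P x ∧ g x = m)).card) (Nb+1) := by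
    intro m hm
    simp only
    rw [Finset.card_eq_zero, Finset.filter_eq_empty_iff]
    rintro x - ⟨-, hgx⟩
    have := hg x
    omega
  by_cases hJ : J ≤ Nb + 1
  · rw [tailSum_eq_Ico hsup J hJ, card_filter_ge_eq_sum P g Nb J hg]
  · rw [tailSum_eq_zero hsup J (by omega)]
    symm
    rw [Finset.card_eq_zero, Finset.filter_eq_empty_iff]
    rintro x - ⟨-, hgx⟩
    have := hg x
    omega

lemma tailSum_actHist {n' : ℕ} (S : Set (Fin n' → Bool)) (J : ℕ) :
    tailSum (actHist n' S) J
      = (Finset.univ.filter (fun s => s ∈ S ∧ J ≤ cnt s)).card := by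
  have hhist : actHist n' S
      = fun m => (Finset.univ.filter (fun s => s ∈ S ∧ cnt s = m)).card := by
    funext m
    rw [actHist]
    have : {s ∈ S | cnt s = m} = ↑(Finset.univ.filter (fun s => s ∈ S ∧ cnt s = m)) := by
      ext s
      simp
    rw [this, Set.ncard_coe_finset]
  rw [hhist, tailSum_count (fun s => s ∈ S) cnt n' (fun s => cnt_le s) J]

/-- Factorization of a linear map of rank at most `k` through `ℝ^k`
(pointwise, via a matrix on the left). -/
lemma exists_factor {a n' : ℕ} (g : (Fin a → ℝ) →ₗ[ℝ] (Fin n' → ℝ)) (k : ℕ)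
    (hk : Module.finrank ℝ (LinearMap.range g) ≤ k) :
    ∃ (Wh : Matrix (Fin n') (Fin k) ℝ) (y : (Fin a → ℝ) → (Fin k → ℝ)),
      ∀ x i, Wh i ⬝ᵥ y x = g x i := by
  set r := Module.finrank ℝ (LinearMap.range g) with hr
  let bas : Module.Basis (Fin r) ℝ (LinearMap.range g) := Module.finBasis ℝ _
  set rep : (Fin a → ℝ) → Fin r → ℝ :=
    fun x => bas.repr ⟨g x, LinearMap.mem_range_self g x⟩ with hrep
  refine ⟨fun i j => if h : (j : ℕ) < r then ((bas ⟨j.val, h⟩ : ↥(LinearMap.range g)) :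
      Fin n' → ℝ) i else 0,
    fun x j => if h : (j : ℕ) < r then rep x ⟨j.val, h⟩ else 0, ?_⟩
  intro x i
  set F : ℕ → ℝ := fun t =>
    if h : t < r then ((bas ⟨t, h⟩ : ↥(LinearMap.range g)) : Fin n' → ℝ) i * rep x ⟨t, h⟩
    else 0 with hF
  have hdp : (fun j : Fin k => (if h : (j : ℕ) < r then ((bas ⟨j.val, h⟩ :
        ↥(LinearMap.range g)) : Fin n' → ℝ) i else 0)
        * (if h : (j : ℕ) < r then rep x ⟨j.val, h⟩ else 0)) = fun j : Fin k => F j.val := by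
    funext j
    by_cases h : (j : ℕ) < r
    · rw [dif_pos h, dif_pos h, hF]
      simp only
      rw [dif_pos h]
    · rw [dif_neg h, dif_neg h, hF]
      simp only
      rw [dif_neg h, zero_mul]
  have hsum : ∑ j : Fin k, F j.val = ∑ j : Fin r, F j.val := by
    rw [Fin.sum_univ_eq_sum_range F k, Fin.sum_univ_eq_sum_range F r]
    symm
    apply Finset.sum_subset (Finset.range_subset_range.2 hk)
    intro t _ ht
    rw [Finset.mem_range] at ht
    rw [hF]
    simp only
    rw [dif_neg ht]
  have hgx : g x i = ∑ j : Fin r, rep x j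
      * ((bas j : ↥(LinearMap.range g)) : Fin n' → ℝ) i := by
    have h1 : (⟨g x, LinearMap.mem_range_self g x⟩ : ↥(LinearMap.range g))
        = ∑ j : Fin r, rep x j • bas j := (bas.sum_repr _).symm
    have h2 := congrArg (fun v : ↥(LinearMap.range g) => (v : Fin n' → ℝ) i) h1
    simp only at h2
    rw [h2]
    rw [AddSubmonoidClass.coe_finset_sum]
    rw [Finset.sum_apply]
    apply Finset.sum_congr rfl
    intro j _
    simp
  show dotProduct _ _ = _
  rw [dotProduct]
  rw [hdp, hsum, hgx]
  apply Finset.sum_congr rfl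
  intro j _
  rw [hF]
  simp only
  rw [dif_pos j.isLt]
  rw [mul_comm]

end Counting



section Main

open scoped Classical

lemma msig_init (n : ℕ → ℕ) (W : ∀ l : ℕ, Matrix (Fin (n (l + 1))) (Fin (n l)) ℝ)
    (b : ∀ l : ℕ, Fin (n (l + 1)) → ℝ) (l : ℕ) (x : Fin (n 0) → ℝ) :
    Fin.init (msig n W b (l+1) x) = msig n W b l x := by
  funext j
  rfl

variable (γ : ℕ → ℕ → ℕ → ℕ) (n : ℕ → ℕ)
  (W : ∀ l : ℕ, Matrix (Fin (n (l + 1))) (Fin (n l)) ℝ)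
  (b : ∀ l : ℕ, Fin (n (l + 1)) → ℝ)

lemma fiber_bound (hγ : BoundCondition γ) (hn : ∀ l, 0 < n l) (l : ℕ)
    (x0 : Fin (n 0) → ℝ) (J : ℕ) :
    (Finset.univ.filter (fun s : Fin (n (l+1)) → Bool =>
        Fin.snoc (msig n W b l x0) s ∈ Set.range (msig n W b (l+1))
          ∧ J ≤ min (cnt s) (minAct n l (msig n W b l x0)))).card
      ≤ tailSum (clip (min (minAct n l (msig n W b l x0)) (n (l+1)))
          (γ (n (l+1)) (min (minAct n l (msig n W b l x0)) (n (l+1))))) J := by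
  set n' := n (l+1) with hn'
  set m := minAct n l (msig n W b l x0) with hm
  set k := min m n' with hk
  obtain ⟨Nγ, hNγ⟩ := exists_supBnd (hγ.1 n' k (hn (l+1)) (min_le_right _ _))
  have hextract : ∀ s : Fin (n (l+1)) → Bool,
      Fin.snoc (msig n W b l x0) s ∈ Set.range (msig n W b (l+1)) →
      ∃ x, msig n W b l x = msig n W b l x0 ∧ sig (W l) (b l) (fwd n W b l x) = s := by
    rintro s ⟨x, hx⟩
    refine ⟨x, ?_, ?_⟩
    · have h1 := congrArg Fin.init hx
      rw [msig_init, Fin.init_snoc] at h1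
      exact h1
    · have h2 := congrArg (fun v => v (Fin.last l)) hx
      rw [Fin.snoc_last] at h2
      exact h2
  by_cases hJk : J ≤ k
  · rw [tailSum_clip hNγ, if_pos hJk]
    obtain ⟨f, c, hrank, hreg⟩ := fwd_affine n W b l x0
    by_cases hk0 : k = 0
    · have hm0 : m = 0 := by
        have := hn (l+1)
        omega
      have hrange0 : LinearMap.range f = ⊥ := by
        have h0 : Module.finrank ℝ (LinearMap.range f) = 0 := by omega
        exact Submodule.finrank_eq_zero.mp h0
      have hfx : ∀ x, f x = 0 := by
        intro x
        have hmem : f x ∈ LinearMap.range f := LinearMap.mem_range_self f x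
        rw [hrange0] at hmem
        simpa using hmem
      have hcard1 : (Finset.univ.filter (fun s : Fin (n (l+1)) → Bool =>
          Fin.snoc (msig n W b l x0) s ∈ Set.range (msig n W b (l+1))
            ∧ J ≤ min (cnt s) m)).card ≤ 1 := by
        rw [Finset.card_le_one]
        intro s1 hs1 s2 hs2
        rw [Finset.mem_filter] at hs1 hs2
        obtain ⟨x1, hx1, hsig1⟩ := hextract s1 hs1.2.1
        obtain ⟨x2, hx2, hsig2⟩ := hextract s2 hs2.2.1
        rw [← hsig1, ← hsig2, hreg x1 hx1, hreg x2 hx2, hfx x1, hfx x2]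
      have hJ0 : J = 0 := by omega
      have h1 := hγ.2.1 n' (hn (l+1)) 0
      rw [tailSum_histE] at h1
      simp only [le_refl, if_pos] at h1
      calc _ ≤ 1 := hcard1
        _ ≤ tailSum (γ n' 0) 0 := h1
        _ = tailSum (γ n' k) J := by rw [hk0, hJ0]
    · set g : (Fin (n 0) → ℝ) →ₗ[ℝ] (Fin n' → ℝ) := (Matrix.mulVecLin (W l)).comp f with hg
      have hrg : Module.finrank ℝ (LinearMap.range g) ≤ k := by
        apply le_min
        · calc Module.finrank ℝ (LinearMap.range g)
              = Module.finrank ℝ ((LinearMap.range f).map (Matrix.mulVecLin (W l))) := by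
                rw [hg, LinearMap.range_comp]
            _ ≤ Module.finrank ℝ (LinearMap.range f) := Submodule.finrank_map_le _ _
            _ ≤ m := hrank
        · calc Module.finrank ℝ (LinearMap.range g)
              ≤ Module.finrank ℝ (Fin n' → ℝ) := Submodule.finrank_le _
            _ = n' := by rw [Module.finrank_pi]; simp
      obtain ⟨Wh, y, hWh⟩ := exists_factor g k hrg
      set bh : Fin n' → ℝ := fun i => (W l *ᵥ c) i + b l i with hbh
      have hsub : (Finset.univ.filter (fun s : Fin (n (l+1)) → Bool =>
          Fin.snoc (msig n W b l x0) s ∈ Set.range (msig n W b (l+1))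
            ∧ J ≤ min (cnt s) m))
          ⊆ Finset.univ.filter (fun s => s ∈ Set.range (sig Wh bh) ∧ J ≤ cnt s) := by
        intro s hs
        rw [Finset.mem_filter] at hs ⊢
        obtain ⟨x, hx, hsig⟩ := hextract s hs.2.1
        have hJc : J ≤ cnt s := hs.2.2.trans (min_le_left _ _)
        refine ⟨Finset.mem_univ _, ⟨y x, ?_⟩, hJc⟩
        rw [← hsig]
        funext i
        show decide (0 < Wh i ⬝ᵥ y x + bh i) = decide (0 < W l i ⬝ᵥ fwd n W b l x + b l i)
        have hde : W l i ⬝ᵥ fwd n W b l x + b l i = Wh i ⬝ᵥ y x + bh i := by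
          rw [hreg x hx, hWh x i, hg]
          show dotProduct (W l i) (f x + c) + b l i = ((W l).mulVecLin (f x)) i + bh i
          rw [Matrix.mulVecLin_apply]
          simp [Matrix.mulVec, dotProduct_add, hbh, add_assoc]
        rw [hde]
      calc _ ≤ (Finset.univ.filter
            (fun s => s ∈ Set.range (sig Wh bh) ∧ J ≤ cnt s)).card :=
            Finset.card_le_card hsub
        _ = tailSum (actHist n' (Set.range (sig Wh bh))) J := (tailSum_actHist _ J).symm
        _ ≤ tailSum (γ n' k) J :=
            hγ.2.2.1 k n' (by omega) (hn (l+1)) (min_le_right m n') Wh bh J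
  · rw [tailSum_clip hNγ, if_neg hJk]
    rw [Nat.le_zero, Finset.card_eq_zero, Finset.filter_eq_empty_iff]
    rintro s - ⟨-, hJs⟩
    have h1 : cnt s ≤ n' := cnt_le s
    omega

lemma step_count (hγ : BoundCondition γ) (hn : ∀ l, 0 < n l) (l J : ℕ) :
    (Finset.univ.filter (fun u => u ∈ Set.range (msig n W b (l+1))
        ∧ J ≤ minAct n (l+1) u)).card
      ≤ ∑ u' ∈ Finset.univ.filter (fun u' => u' ∈ Set.range (msig n W b l)),
          tailSum (clip (min (minAct n l u') (n (l+1)))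
            (γ (n (l+1)) (min (minAct n l u') (n (l+1))))) J := by
  rw [Finset.card_eq_sum_card_fiberwise
    (f := fun u => (Fin.init u : ∀ j : Fin l, Fin (n (j.val + 1)) → Bool))
    (t := Finset.univ.filter (fun u' => u' ∈ Set.range (msig n W b l)))
    (fun u hu => by
      rw [Finset.mem_coe, Finset.mem_filter] at hu ⊢
      obtain ⟨x, hx⟩ := hu.2.1
      exact ⟨Finset.mem_univ _, ⟨x, by rw [← hx]; exact (msig_init n W b l x).symm⟩⟩)]
  apply Finset.sum_le_sum
  intro u' hu'
  rw [Finset.mem_filter] at hu'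
  obtain ⟨x0, hx0⟩ := hu'.2
  subst hx0
  refine le_trans (Finset.card_le_card_of_injOn (fun u => u (Fin.last l)) ?_ ?_)
    (fiber_bound γ n W b hγ hn l x0 J)
  · intro u hu
    rw [Finset.mem_coe, Finset.mem_filter, Finset.mem_filter] at hu
    obtain ⟨⟨-, hmem, hJ⟩, hinit⟩ := hu
    have husnoc : u = Fin.snoc (msig n W b l x0) (u (Fin.last l)) := by
      conv_lhs => rw [← Fin.snoc_init_self u]
      rw [hinit]
    rw [Finset.mem_coe, Finset.mem_filter]
    refine ⟨Finset.mem_univ _, ?_, ?_⟩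
    · rw [← husnoc]; exact hmem
    · rw [husnoc, minAct_snoc] at hJ
      exact hJ
  · intro u1 hu1 u2 hu2 heq
    rw [Finset.mem_coe, Finset.mem_filter] at hu1 hu2
    have h1 : u1 = Fin.snoc (msig n W b l x0) (u1 (Fin.last l)) := by
      conv_lhs => rw [← Fin.snoc_init_self u1]
      rw [hu1.2]
    have h2 : u2 = Fin.snoc (msig n W b l x0) (u2 (Fin.last l)) := by
      conv_lhs => rw [← Fin.snoc_init_self u2]
      rw [hu2.2]
    rw [h1, h2]
    exact congrArg _ heq

lemma main_bound (hγ : BoundCondition γ) (hn : ∀ l, 0 < n l) :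
    ∀ l J, (Finset.univ.filter (fun u => u ∈ Set.range (msig n W b l)
        ∧ J ≤ minAct n l u)).card ≤ tailSum (phiIter γ n l) J := by
  intro l
  induction l with
  | zero =>
    intro J
    show _ ≤ tailSum (histE (n 0)) J
    rw [tailSum_histE]
    by_cases hJ : J ≤ n 0
    · rw [if_pos hJ, Finset.card_le_one]
      intro a _ c _
      exact Subsingleton.elim a c
    · rw [if_neg hJ, Nat.le_zero, Finset.card_eq_zero, Finset.filter_eq_empty_iff]
      rintro u - ⟨-, hJu⟩
      have := minAct_le_n0 n 0 u
      omega
  | succ l ih =>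
    intro J
    set n' := n (l+1) with hn'
    set N := n 0 + n l + 1 with hN
    set v : ℕ → ℕ := fun m => (Finset.univ.filter (fun u => u ∈ Set.range (msig n W b l)
        ∧ minAct n l u = m)).card with hv
    have hvsup : supBnd v N := by
      intro m hmN
      rw [hv]
      simp only
      rw [Finset.card_eq_zero, Finset.filter_eq_empty_iff]
      rintro u - ⟨-, hmu⟩
      have := minAct_le_n0 n l u
      omega
    have hwsup : supBnd (phiIter γ n l) N := supBnd_phiIter γ n l
    have hhle : hle v (phiIter γ n l) := by
      intro J'
      rw [hv, tailSum_count (fun u => u ∈ Set.range (msig n W b l)) (minAct n l) (n 0)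
        (fun u => minAct_le_n0 n l u) J']
      exact ih J'
    calc (Finset.univ.filter (fun u => u ∈ Set.range (msig n W b (l+1))
          ∧ J ≤ minAct n (l+1) u)).card
        ≤ ∑ u' ∈ Finset.univ.filter (fun u' => u' ∈ Set.range (msig n W b l)),
            tailSum (clip (min (minAct n l u') n') (γ n' (min (minAct n l u') n'))) J :=
          step_count γ n W b hγ hn l J
      _ = ∑ m ∈ Finset.range N, v m * tailSum (clip (min m n') (γ n' (min m n'))) J := by
          rw [← Finset.sum_fiberwise_of_maps_to (g := fun u' => minAct n l u')
            (t := Finset.range N)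
            (fun u' _ => Finset.mem_range.2 (by
              show minAct n l u' < N
              have := minAct_le_n0 n l u'
              omega))]
          apply Finset.sum_congr rfl
          intro m _
          rw [Finset.filter_filter]
          have hconst : ∑ u' ∈ Finset.univ.filter (fun a => a ∈ Set.range (msig n W b l)
                ∧ minAct n l a = m),
              tailSum (clip (min (minAct n l u') n') (γ n' (min (minAct n l u') n'))) J
              = ∑ _u' ∈ Finset.univ.filter (fun a => a ∈ Set.range (msig n W b l)
                ∧ minAct n l a = m),
              tailSum (clip (min m n') (γ n' (min m n'))) J := by
            apply Finset.sum_congr rfl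
            intro u' hu'
            rw [Finset.mem_filter] at hu'
            rw [hu'.2.2]
          rw [hconst, Finset.sum_const, smul_eq_mul, hv]
      _ ≤ ∑ m ∈ Finset.range N, phiIter γ n l m
            * tailSum (clip (min m n') (γ n' (min m n'))) J :=
          abel_le hvsup hwsup hhle (aJ_mono hγ (hn (l+1)) J)
      _ = tailSum (phi γ n' (phiIter γ n l)) J := (tailSum_phi hwsup J).symm
      _ = tailSum (phiIter γ n (l+1)) J := rfl

end Main


/-- Let `γ ∈ Γ` satisfy the bound condition. In the multilayer setting with widths
`n 0, …, n L`, the number of attained multi signatures satisfies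
`|𝒮_h| ≤ ‖φ^{(γ)}_{n_L} ∘ ⋯ ∘ φ^{(γ)}_{n_1}(e_{n_0})‖₁`, the `L1`-norm being the total
sum `∑_j v_j = tailSum v 0`. -/
theorem stmt14 (γ : ℕ → ℕ → ℕ → ℕ) (hγ : BoundCondition γ)
    (L : ℕ) (hL : 0 < L) (n : ℕ → ℕ) (hn : ∀ l, 0 < n l)
    (W : ∀ l : ℕ, Matrix (Fin (n (l + 1))) (Fin (n l)) ℝ)
    (b : ∀ l : ℕ, Fin (n (l + 1)) → ℝ) :
    (Set.range (msig n W b L)).ncard ≤ tailSum (phiIter γ n L) 0 := by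
  classical
  have h1 : Set.range (msig n W b L)
      = ↑(Finset.univ.filter (fun u => u ∈ Set.range (msig n W b L))) := by
    ext u
    simp
  rw [h1, Set.ncard_coe_finset]
  have h2 : (Finset.univ.filter (fun u => u ∈ Set.range (msig n W b L))).card
      = (Finset.univ.filter (fun u => u ∈ Set.range (msig n W b L)
          ∧ 0 ≤ minAct n L u)).card := by
    congr 1
    apply Finset.filter_congr
    intro u _
    simp
  rw [h2]
  exact main_bound γ n W b hγ hn L 0
end

section
/- The Zaslavsky collection γ defined by γ_{n,n'} = (Σ_{j=0}^{n} C(n', j)) e_{n'} for n' ∈ ℕ₊ and n ∈ {0, …, n'} satisfies the bound condition, i.e. γ ∈ Γ. -/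
open Matrix

/-- The Zaslavsky collection `γ_{n,n'} = (∑_{j=0}^{n} C(n', j)) e_{n'}`
(accessed as `zasGamma n' n`). -/
def zasGamma (n' n : ℕ) : ℕ → ℕ :=
  fun i => if i = n' then ∑ j ∈ Finset.range (n + 1), n'.choose j else 0

-- helper sign lemma
lemma sign_helper {n n' : ℕ} (W : Matrix (Fin n') (Fin n) ℝ) (b : Fin n' → ℝ)
    (t : Finset (Fin n'))
    (hsh : ∀ T ⊆ t, ∃ x : Fin n → ℝ, ∀ i ∈ t, (0 < W i ⬝ᵥ x + b i ↔ i ∈ T))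
    (c : Fin n' → ℝ) (d : ℝ)
    (hval : ∀ x : Fin n → ℝ, ∑ i ∈ t, c i * (W i ⬝ᵥ x + b i) = -d) :
    d ≤ 0 ∧ ((∃ i ∈ t, 0 < c i) → d < 0) := by
  classical
  obtain ⟨x, hx⟩ := hsh (t.filter fun i => 0 < c i) (Finset.filter_subset _ _)
  have hterm : ∀ i ∈ t, 0 ≤ c i * (W i ⬝ᵥ x + b i) := by
    intro i hi
    rcases lt_or_ge 0 (c i) with hc | hc
    · exact le_of_lt (mul_pos hc ((hx i hi).2 (Finset.mem_filter.mpr ⟨hi, hc⟩)))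
    · have hf : W i ⬝ᵥ x + b i ≤ 0 := by
        by_contra h
        push_neg at h
        have := (hx i hi).1 h
        rw [Finset.mem_filter] at this
        exact absurd this.2 (not_lt.mpr hc)
      nlinarith
  constructor
  · have h0 : 0 ≤ ∑ i ∈ t, c i * (W i ⬝ᵥ x + b i) := Finset.sum_nonneg hterm
    rw [hval x] at h0; linarith
  · rintro ⟨i0, hi0, hc0⟩
    have hpos : 0 < ∑ i ∈ t, c i * (W i ⬝ᵥ x + b i) :=
      Finset.sum_pos' hterm ⟨i0, hi0,
        mul_pos hc0 ((hx i0 hi0).2 (Finset.mem_filter.mpr ⟨hi0, hc0⟩))⟩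
    rw [hval x] at hpos; linarith

lemma shatters_card_le {n n' : ℕ} (W : Matrix (Fin n') (Fin n) ℝ) (b : Fin n' → ℝ)
    (t : Finset (Fin n'))
    (hsh : ∀ T ⊆ t, ∃ x : Fin n → ℝ, ∀ i ∈ t, (0 < W i ⬝ᵥ x + b i ↔ i ∈ T)) :
    t.card ≤ n := by
  classical
  by_contra hlt
  push_neg at hlt
  obtain ⟨u, hut, hu⟩ := Finset.exists_subset_card_eq hlt
  have hsh' : ∀ T ⊆ u, ∃ x : Fin n → ℝ, ∀ i ∈ u, (0 < W i ⬝ᵥ x + b i ↔ i ∈ T) := by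
    intro T hT
    obtain ⟨x, hx⟩ := hsh T (hT.trans hut)
    exact ⟨x, fun i hi => hx i (hut hi)⟩
  clear hsh hut hlt
  -- linear dependence
  set v : Option {i // i ∈ u} → (Fin n → ℝ) × ℝ :=
    fun o => Option.elim o ((0 : Fin n → ℝ), (1 : ℝ)) (fun i => (W i.1, b i.1)) with hv
  have hnli : ¬ LinearIndependent ℝ v := by
    intro h
    have hcard := h.fintype_card_le_finrank
    rw [Module.finrank_prod, Module.finrank_fin_fun, Module.finrank_self] at hcard
    simp [Fintype.card_option, Fintype.card_coe, hu] at hcard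
  obtain ⟨g, hg, i0, hi0⟩ := Fintype.not_linearIndependent_iff.mp hnli
  set c : Fin n' → ℝ := fun i => if h : i ∈ u then g (some ⟨i, h⟩) else 0 with hc
  set d : ℝ := g none with hd
  have hg1 : ∑ i : {i // i ∈ u}, g (some i) • W i.1 = (0 : Fin n → ℝ) := by
    have := congrArg Prod.fst hg
    rw [Prod.fst_sum] at this
    simpa [hv, Fintype.sum_option] using this
  have hg2 : d + ∑ i : {i // i ∈ u}, g (some i) * b i.1 = 0 := by
    have := congrArg Prod.snd hg
    rw [Prod.snd_sum] at this
    simpa [hv, hd, Fintype.sum_option, smul_eq_mul] using this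
  have key : ∀ x : Fin n → ℝ, ∑ i ∈ u, c i * (W i ⬝ᵥ x + b i) = -d := by
    intro x
    have h1 : ∑ i ∈ u, c i * (W i ⬝ᵥ x + b i)
        = ∑ i : {i // i ∈ u}, g (some i) * (W i.1 ⬝ᵥ x + b i.1) := by
      rw [Finset.univ_eq_attach, ← Finset.sum_attach u (fun i => c i * (W i ⬝ᵥ x + b i))]
      refine Finset.sum_congr rfl fun i _ => ?_
      simp [hc, i.2]
    rw [h1]
    have h2 : ∀ i : {i // i ∈ u}, g (some i) * (W i.1 ⬝ᵥ x + b i.1)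
        = (g (some i) • W i.1) ⬝ᵥ x + g (some i) * b i.1 := by
      intro i
      rw [smul_dotProduct, smul_eq_mul, mul_add]
    simp_rw [h2]
    have hsum : ∑ i : {i // i ∈ u}, (g (some i) • W i.1) ⬝ᵥ x
        = (∑ i : {i // i ∈ u}, g (some i) • W i.1) ⬝ᵥ x := by
      simp only [dotProduct, Finset.sum_apply, Finset.sum_mul]
      exact Finset.sum_comm
    rw [Finset.sum_add_distrib, hsum, hg1, zero_dotProduct]
    linarith [hg2]
  have H1 := sign_helper W b u hsh' c d key
  have key2 : ∀ x : Fin n → ℝ, ∑ i ∈ u, (-c) i * (W i ⬝ᵥ x + b i) = -(-d) := by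
    intro x
    simp only [Pi.neg_apply, neg_mul, neg_neg]
    rw [Finset.sum_neg_distrib, key x, neg_neg]
  have H2 := sign_helper W b u hsh' (-c) (-d) key2
  have hd0 : d = 0 := le_antisymm H1.1 (by linarith [H2.1])
  have hcle : ∀ i ∈ u, c i ≤ 0 := by
    intro i hi
    by_contra h
    push_neg at h
    have := H1.2 ⟨i, hi, h⟩
    linarith [hd0 ▸ this]
  have hcge : ∀ i ∈ u, 0 ≤ c i := by
    intro i hi
    by_contra h
    push_neg at h
    have h2 : 0 < (-c) i := by simpa using h
    have := H2.2 ⟨i, hi, h2⟩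
    rw [hd0] at this
    simp at this
  have hczero : ∀ i ∈ u, c i = 0 := fun i hi => le_antisymm (hcle i hi) (hcge i hi)
  cases i0 with
  | none => exact hi0 hd0
  | some j =>
    refine hi0 ?_
    have := hczero j.1 j.2
    simpa [hc] using this

lemma sig_card_le {n n' : ℕ} (W : Matrix (Fin n') (Fin n) ℝ) (b : Fin n' → ℝ) :
    (Set.toFinite (Set.range (sig W b))).toFinset.card
      ≤ ∑ j ∈ Finset.range (n + 1), n'.choose j := by
  classical
  set F := (Set.toFinite (Set.range (sig W b))).toFinset with hF
  set toS : (Fin n' → Bool) → Finset (Fin n') :=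
    fun s => Finset.univ.filter (fun i => s i = true) with htoS
  have hinj : Function.Injective toS := by
    intro s1 s2 h
    funext i
    have h1 : i ∈ toS s1 ↔ i ∈ toS s2 := by rw [h]
    simp only [htoS, Finset.mem_filter, Finset.mem_univ, true_and] at h1
    cases e1 : s1 i <;> cases e2 : s2 i <;> simp_all
  set A := F.image toS with hA
  have hvc : A.vcDim ≤ n := by
    refine Finset.sup_le fun s hs => ?_
    rw [Finset.mem_shatterer] at hs
    refine shatters_card_le W b s fun T hT => ?_
    obtain ⟨u', hu', huT⟩ := hs hT
    rw [hA, Finset.mem_image] at hu'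
    obtain ⟨σ, hσF, rfl⟩ := hu'
    rw [hF, Set.Finite.mem_toFinset] at hσF
    obtain ⟨x, rfl⟩ := hσF
    refine ⟨x, fun i hi => ?_⟩
    have hmem : i ∈ T ↔ i ∈ s ∩ toS (sig W b x) := by rw [huT]
    rw [Finset.mem_inter] at hmem
    simp only [htoS, Finset.mem_filter, Finset.mem_univ, true_and, sig,
      decide_eq_true_eq] at hmem
    exact ⟨fun hpos => hmem.mpr ⟨hi, hpos⟩, fun hiT => (hmem.mp hiT).2⟩
  calc F.card = A.card := (Finset.card_image_of_injective _ hinj).symm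
    _ ≤ A.shatterer.card := Finset.card_le_card_shatterer A
    _ ≤ ∑ k ∈ Finset.Iic A.vcDim, (Fintype.card (Fin n')).choose k :=
        Finset.card_shatterer_le_sum_vcDim
    _ ≤ ∑ k ∈ Finset.Iic n, (Fintype.card (Fin n')).choose k :=
        Finset.sum_le_sum_of_subset (Finset.Iic_subset_Iic.mpr hvc)
    _ = ∑ j ∈ Finset.range (n + 1), n'.choose j := by
        rw [show Finset.Iic n = Finset.range (n + 1) by ext x; simp [Nat.lt_succ_iff]]
        simp

lemma tailSum_ite (K i J : ℕ) :
    tailSum (fun j => if j = i then K else 0) J = if J ≤ i then K else 0 := by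
  rw [tailSum, tsum_eq_single i]
  · simp
  · intro b hb; simp [hb]

lemma tailSum_zas (n' n J : ℕ) :
    tailSum (zasGamma n' n) J
      = if J ≤ n' then ∑ j ∈ Finset.range (n + 1), n'.choose j else 0 := by
  unfold zasGamma; exact tailSum_ite _ n' J

lemma part3 {n n' : ℕ} (W : Matrix (Fin n') (Fin n) ℝ) (b : Fin n' → ℝ) :
    hle (actHist n' (Set.range (sig W b))) (zasGamma n' n) := by
  classical
  intro J
  set S := Set.range (sig W b) with hS
  set F := (Set.toFinite S).toFinset with hF
  have hact : ∀ j, actHist n' S j = (F.filter (fun s => cnt s = j)).card := by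
    intro j
    rw [actHist, show {s ∈ S | cnt s = j} = ↑(F.filter fun s => cnt s = j) by
      ext s; simp [hF, hS, Set.Finite.mem_toFinset, Set.mem_setOf_eq, Set.mem_range]]
    exact Set.ncard_coe_finset _
  have hcnt : ∀ s : Fin n' → Bool, cnt s ≤ n' := fun s =>
    le_trans (Finset.card_filter_le _ _) (by simp)
  have hts : tailSum (actHist n' S) J
      = ∑ j ∈ Finset.range (n' + 1), (if J ≤ j then actHist n' S j else 0) := by
    rw [tailSum]
    apply tsum_eq_sum
    intro j hj
    rw [Finset.mem_range, not_lt] at hj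
    have hz : actHist n' S j = 0 := by
      rw [hact, Finset.card_eq_zero, Finset.filter_eq_empty_iff]
      intro s _
      exact fun e => absurd (e ▸ hcnt s) (by omega)
    simp [hz]
  rw [hts, tailSum_zas]
  rcases le_or_gt J n' with h | h
  · rw [if_pos h]
    calc ∑ j ∈ Finset.range (n' + 1), (if J ≤ j then actHist n' S j else 0)
        ≤ ∑ j ∈ Finset.range (n' + 1), actHist n' S j :=
          Finset.sum_le_sum fun j _ => by split_ifs <;> simp
      _ = F.card := by
          simp_rw [hact]
          exact (Finset.card_eq_sum_card_fiberwise fun s _ =>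
            Finset.mem_range.mpr (Nat.lt_succ_of_le (hcnt s))).symm
      _ ≤ ∑ j ∈ Finset.range (n + 1), n'.choose j := sig_card_le W b
  · rw [if_neg (not_le.mpr h)]
    refine le_of_eq (Finset.sum_eq_zero fun j hj => ?_)
    rw [Finset.mem_range] at hj
    rw [if_neg (by omega)]

/-- The Zaslavsky collection `γ` satisfies the bound condition, i.e. `γ ∈ Γ`. -/
theorem stmt17 : BoundCondition zasGamma := by
  refine ⟨?_, ?_, ?_, ?_⟩
  · intro n' nn _ _
    refine Set.Finite.subset (Set.finite_singleton n') fun x hx => ?_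
    simp only [Function.mem_support, zasGamma] at hx
    show x ∈ ({n'} : Set ℕ)
    rw [Set.mem_singleton_iff]
    by_contra h
    exact hx (if_neg h)
  · intro n' hn' J
    rw [tailSum_histE, tailSum_zas]
    have h1 : ∑ j ∈ Finset.range (0 + 1), n'.choose j = 1 := by simp
    rw [h1]
    split_ifs <;> omega
  · intro nn n' _ _ _ W b
    exact part3 W b
  · intro n' nn m _ hnm _ J
    rw [tailSum_zas, tailSum_zas]
    split_ifs
    · exact Finset.sum_le_sum_of_subset (Finset.range_subset_range.mpr (by omega))
    · exact le_refl 0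
end
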